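/- Let λ ∈ ℝ with λ ≠ 0 and let v₀,…,v₈ be the D2Q9 velocities. For every ũ ∈ ℝ² and every α ∈ ℝ, there exists an invertible 9×9 real matrix T with determinant 1 such that M_{ũ,α} = T · M_{ũ,0}, where M_{ũ,α} is the moment matrix with entries (M_{ũ,α})_{kj} = P_k^α(vⱼ − ũ) for the polynomial family (P₀^α,…,P₈^α) = (1, X, Y, X²+Y², X²−Y², XY, X(αX²+Y²), Y(X²+αY²), (α/2)(X⁴+Y⁴)+X²Y²); moreover T differs from the identity only in rows 6, 7 and 8, where it adds α-multiples of the rows 0, 1, 2, 3, 4. -/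
import Mathlib


/-- x-components of the D2Q9 velocities. -/
def vx (lam : ℝ) : Fin 9 → ℝ := ![0, lam, 0, -lam, 0, lam, -lam, -lam, lam]

/-- y-components of the D2Q9 velocities. -/
def vy (lam : ℝ) : Fin 9 → ℝ := ![0, 0, lam, 0, -lam, lam, lam, -lam, -lam]

/-- The moment polynomials `1, X, Y, X²+Y², X²−Y², XY, X(αX²+Y²), Y(X²+αY²),
(α/2)(X⁴+Y⁴)+X²Y²` evaluated at `(x, y)`. -/
noncomputable def P (α x y : ℝ) : Fin 9 → ℝ :=
  ![1, x, y, x ^ 2 + y ^ 2, x ^ 2 - y ^ 2, x * y,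
    x * (α * x ^ 2 + y ^ 2), y * (x ^ 2 + α * y ^ 2),
    α / 2 * (x ^ 4 + y ^ 4) + x ^ 2 * y ^ 2]

/-- The moment matrix `(M_{ũ,α})_{kj} = P_k^α(v_j − ũ)`. -/
noncomputable def Mmat (lam α ux uy : ℝ) : Matrix (Fin 9) (Fin 9) ℝ :=
  fun k j => P α (vx lam j - ux) (vy lam j - uy) k

open Matrix in
@[simp] lemma cons_val_five' {α : Type*} {m : ℕ} (x : α) (u : Fin (m + 5) → α) :
    vecCons x u 5 = vecHead (vecTail (vecTail (vecTail (vecTail u)))) := rfl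

open Matrix in
@[simp] lemma cons_val_six' {α : Type*} {m : ℕ} (x : α) (u : Fin (m + 6) → α) :
    vecCons x u 6 = vecHead (vecTail (vecTail (vecTail (vecTail (vecTail u))))) := rfl

open Matrix in
@[simp] lemma cons_val_seven' {α : Type*} {m : ℕ} (x : α) (u : Fin (m + 7) → α) :
    vecCons x u 7 = vecHead (vecTail (vecTail (vecTail (vecTail (vecTail (vecTail u)))))) := rfl

open Matrix in
@[simp] lemma cons_val_eight' {α : Type*} {m : ℕ} (x : α) (u : Fin (m + 8) → α) :
    vecCons x u 8 =
      vecHead (vecTail (vecTail (vecTail (vecTail (vecTail (vecTail (vecTail u))))))) := rfl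

/-- Row 6 of the correction matrix. -/
noncomputable def Erow6 (lam ux : ℝ) : Fin 9 → ℝ :=
  ![-ux^3+lam^2*ux, lam^2-3*ux^2, 0, -3*ux/2, -3*ux/2, 0, 0, 0, 0]

/-- Row 7 of the correction matrix. -/
noncomputable def Erow7 (lam uy : ℝ) : Fin 9 → ℝ :=
  ![-uy^3+lam^2*uy, 0, lam^2-3*uy^2, -3*uy/2, 3*uy/2, 0, 0, 0, 0]

/-- Row 8 of the correction matrix. -/
noncomputable def Erow8 (lam ux uy : ℝ) : Fin 9 → ℝ :=
  ![3/2*(ux^4-lam^2*ux^2+uy^4-lam^2*uy^2), 4*ux^3-lam^2*ux, 4*uy^3-lam^2*uy,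
    (3*ux^2+3*uy^2+lam^2)/2, 3/2*(ux^2-uy^2), 0, 0, 0, 0]

/-- Auxiliary correction matrix. -/
noncomputable def Emat (lam ux uy : ℝ) : Matrix (Fin 9) (Fin 9) ℝ := fun k j =>
  if k = 6 then Erow6 lam ux j
  else if k = 7 then Erow7 lam uy j
  else if k = 8 then Erow8 lam ux uy j
  else 0

lemma Erow6_col (lam ux : ℝ) (j : Fin 9) (hj : j = 5 ∨ j = 6 ∨ j = 7 ∨ j = 8) :
    Erow6 lam ux j = 0 := by rcases hj with rfl | rfl | rfl | rfl <;> rfl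

lemma Erow7_col (lam uy : ℝ) (j : Fin 9) (hj : j = 5 ∨ j = 6 ∨ j = 7 ∨ j = 8) :
    Erow7 lam uy j = 0 := by rcases hj with rfl | rfl | rfl | rfl <;> rfl

lemma Erow8_col (lam ux uy : ℝ) (j : Fin 9) (hj : j = 5 ∨ j = 6 ∨ j = 7 ∨ j = 8) :
    Erow8 lam ux uy j = 0 := by rcases hj with rfl | rfl | rfl | rfl <;> rfl

lemma Emat_row_zero (lam ux uy : ℝ) (k j : Fin 9) (hk : ¬(k = 6 ∨ k = 7 ∨ k = 8)) :
    Emat lam ux uy k j = 0 := by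
  push_neg at hk
  simp [Emat, hk.1, hk.2.1, hk.2.2]

lemma Emat_col_zero (lam ux uy : ℝ) (k j : Fin 9) (hj : j = 5 ∨ j = 6 ∨ j = 7 ∨ j = 8) :
    Emat lam ux uy k j = 0 := by
  unfold Emat
  split_ifs <;>
    simp [Erow6_col lam ux j hj, Erow7_col lam uy j hj, Erow8_col lam ux uy j hj]

lemma Emat_lower (lam ux uy : ℝ) (i j : Fin 9) (hij : i < j) :
    Emat lam ux uy i j = 0 := by
  by_cases hi : i = 6 ∨ i = 7 ∨ i = 8
  · apply Emat_col_zero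
    have hiv : (6 : ℕ) ≤ i.val := by
      rcases hi with rfl | rfl | rfl <;> decide
    have hjv : (7 : ℕ) ≤ j.val := by
      have := (Fin.lt_def.mp hij); omega
    have hj9 := j.isLt
    fin_cases j <;> simp_all
  · exact Emat_row_zero lam ux uy i j hi

lemma Emat_support (lam ux uy : ℝ) (k j : Fin 9) (h : Emat lam ux uy k j ≠ 0) :
    k ∈ ({6, 7, 8} : Set (Fin 9)) ∧ j ∈ ({0, 1, 2, 3, 4} : Set (Fin 9)) := by
  constructor
  · by_contra hk
    simp only [Set.mem_insert_iff, Set.mem_singleton_iff] at hk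
    exact h (Emat_row_zero lam ux uy k j (by tauto))
  · by_contra hj
    simp only [Set.mem_insert_iff, Set.mem_singleton_iff] at hj
    push_neg at hj
    refine h (Emat_col_zero lam ux uy k j ?_)
    obtain ⟨h0, h1, h2, h3, h4⟩ := hj
    fin_cases j <;> simp_all

lemma Emat_apply6 (lam ux uy : ℝ) (j : Fin 9) : Emat lam ux uy 6 j = Erow6 lam ux j := rfl
lemma Emat_apply7 (lam ux uy : ℝ) (j : Fin 9) : Emat lam ux uy 7 j = Erow7 lam uy j := rfl
lemma Emat_apply8 (lam ux uy : ℝ) (j : Fin 9) : Emat lam ux uy 8 j = Erow8 lam ux uy j := rfl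

set_option maxHeartbeats 4000000 in
lemma Mmat_eq (lam ux uy α : ℝ) :
    Mmat lam α ux uy = (1 + α • Emat lam ux uy) * Mmat lam 0 ux uy := by
  rw [Matrix.add_mul, Matrix.one_mul, Matrix.smul_mul]
  ext k j
  rw [Matrix.add_apply, Matrix.smul_apply]
  by_cases hk : k = 6 ∨ k = 7 ∨ k = 8
  · rcases hk with rfl | rfl | rfl <;>
      · rw [Matrix.mul_apply]
        fin_cases j <;>
          · simp only [Mmat, P, vx, vy, Emat_apply6, Emat_apply7, Emat_apply8, Erow6, Erow7, Erow8, Fin.sum_univ_succ,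
              Finset.univ_unique, Finset.sum_singleton, Fin.succ, Fin.isValue,
              Matrix.cons_val_zero, Matrix.cons_val_one, Matrix.head_cons,
              Matrix.cons_val_succ, if_true, if_false, reduceIte,
              cons_val_five', cons_val_six', cons_val_seven', cons_val_eight',
              Matrix.vecHead, Matrix.vecTail, Function.comp]
            norm_num
            ring
  · have h0 : (Emat lam ux uy * Mmat lam 0 ux uy) k j = 0 := by
      rw [Matrix.mul_apply]
      apply Finset.sum_eq_zero
      intro i _
      rw [Emat_row_zero lam ux uy k i hk, zero_mul]
    rw [h0, smul_zero, add_zero]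
    have hk' : k = 0 ∨ k = 1 ∨ k = 2 ∨ k = 3 ∨ k = 4 ∨ k = 5 :=
      (by decide :
        ∀ k : Fin 9, ¬(k = 6 ∨ k = 7 ∨ k = 8) →
          k = 0 ∨ k = 1 ∨ k = 2 ∨ k = 3 ∨ k = 4 ∨ k = 5) k hk
    rcases hk' with rfl | rfl | rfl | rfl | rfl | rfl <;>
      simp only [Mmat, P, Matrix.cons_val_zero, Matrix.cons_val_one, Matrix.head_cons,
        Matrix.cons_val_succ, Matrix.cons_val_two, Matrix.cons_val_three,
        Matrix.cons_val_four, cons_val_five', Matrix.vecHead, Matrix.vecTail,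
        Function.comp]

/-- The moment matrix `M_{ũ,α}` is obtained from the cascaded moment matrix
`M_{ũ,0}` by an invertible change of basis `T` of determinant one: `T` is the
identity plus an `α`-multiple of a matrix supported on the rows `6, 7, 8` and
the columns `0, 1, 2, 3, 4`. -/
theorem stmt_14 (lam : ℝ) (hlam : lam ≠ 0) (ux uy : ℝ) (α : ℝ) :
    ∃ T : Matrix (Fin 9) (Fin 9) ℝ, IsUnit T ∧ T.det = 1 ∧
      Mmat lam α ux uy = T * Mmat lam 0 ux uy ∧
      ∃ E : Matrix (Fin 9) (Fin 9) ℝ,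
        T = 1 + α • E ∧
        ∀ k j, E k j ≠ 0 →
          k ∈ ({6, 7, 8} : Set (Fin 9)) ∧ j ∈ ({0, 1, 2, 3, 4} : Set (Fin 9)) := by
  set E := Emat lam ux uy with hE
  have hlow : ∀ i j : Fin 9, i < j → (1 + α • E) i j = 0 := by
    intro i j hij
    have h1 : (1 : Matrix (Fin 9) (Fin 9) ℝ) i j = 0 := Matrix.one_apply_ne (Fin.ne_of_lt hij)
    simp [Matrix.add_apply, Matrix.smul_apply, h1, hE, Emat_lower lam ux uy i j hij]
  have hdiag : ∀ i : Fin 9, (1 + α • E) i i = 1 := by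
    intro i
    have hEii : E i i = 0 := by
      by_cases hi : i = 6 ∨ i = 7 ∨ i = 8
      · exact Emat_col_zero lam ux uy i i (by tauto)
      · exact Emat_row_zero lam ux uy i i hi
    simp [Matrix.add_apply, Matrix.smul_apply, Matrix.one_apply, hEii]
  have hdet : (1 + α • E).det = 1 := by
    rw [Matrix.det_of_lowerTriangular _ (fun i j h => hlow i j h)]
    simp [hdiag]
  exact ⟨1 + α • E, (Matrix.isUnit_iff_isUnit_det _).2 (hdet ▸ isUnit_one), hdet,
    Mmat_eq lam ux uy α, E, rfl, Emat_support lam ux uy⟩
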